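/- Let k > 1 and let f : ℝ → ℝ be a positive function that is continuous on [0, 1]. If there exists R₀ ∈ [0, (k−1)/k) with f(R₀) > (k−1)/((k−1)/k − R₀), then there exists R* ∈ (R₀, (k−1)/k) with f(R*) = (k−1)/((k−1)/k − R*); consequently, setting I* = R*/(k−1), the pair (I*, R*) is an endemic equilibrium with I* ∈ (R₀/(k−1), 1/k). -/

import Mathlib

/-- If f(R₀) > g(R₀) for some R₀ ∈ [0, (k−1)/k), then there is an endemic
equilibrium (I*, R*) with R* ∈ (R₀, (k−1)/k) and I* = R*/(k−1) ∈ (R₀/(k−1), 1/k). -/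
theorem sir_endemic_equilibrium_existence
    (k : ℝ) (hk : 1 < k)
    (f : ℝ → ℝ) (hf_pos : ∀ x, 0 < f x) (hf_cont : ContinuousOn f (Set.Icc 0 1))
    (R₀ : ℝ) (hR₀ : R₀ ∈ Set.Ico 0 ((k - 1) / k))
    (hfg : f R₀ > (k - 1) / ((k - 1) / k - R₀)) :
    ∃ Rstar ∈ Set.Ioo R₀ ((k - 1) / k),
      f Rstar = (k - 1) / ((k - 1) / k - Rstar) ∧
      Rstar / (k - 1) ∈ Set.Ioo (R₀ / (k - 1)) (1 / k) ∧
      0 < Rstar / (k - 1) ∧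
      f Rstar * (1 - Rstar / (k - 1) - Rstar) - k = 0 ∧
      (k - 1) * (Rstar / (k - 1)) - Rstar = 0 := by
  have hk0 : (0 : ℝ) < k := by linarith
  have hk1 : (0 : ℝ) < k - 1 := by linarith
  set b : ℝ := (k - 1) / k with hb
  have hb1 : b < 1 := by
    rw [hb, div_lt_one hk0]; linarith
  have hb0 : 0 < b := div_pos hk1 hk0
  obtain ⟨hR₀0, hR₀b⟩ := hR₀
  have hsub : Set.Icc R₀ b ⊆ Set.Icc 0 1 :=
    Set.Icc_subset_Icc hR₀0 (le_of_lt hb1)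
  set h : ℝ → ℝ := fun R => f R * (b - R) - (k - 1) with hh
  have hcont : ContinuousOn h (Set.Icc R₀ b) := by
    apply ContinuousOn.sub
    · exact ((hf_cont.mono hsub).mul (by fun_prop))
    · fun_prop
  have hhb : h b < 0 := by
    simp only [hh, sub_self, mul_zero]; linarith
  have hhR₀ : 0 < h R₀ := by
    have hd : 0 < b - R₀ := by linarith
    have := (div_lt_iff₀ hd).mp hfg
    simp only [hh]; linarith
  have hiv := intermediate_value_Ioo' (le_of_lt hR₀b) hcont
    (Set.mem_Ioo.mpr ⟨hhb, hhR₀⟩)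
  obtain ⟨R, hRmem, hR0⟩ := hiv
  obtain ⟨hR1, hR2⟩ := hRmem
  have hd : 0 < b - R := by linarith
  have hfR : f R * (b - R) = k - 1 := by
    have : h R = 0 := hR0
    simp only [hh] at this; linarith
  have hfeq : f R = (k - 1) / (b - R) := by
    field_simp [ne_of_gt hd]; linarith [hfR]
  refine ⟨R, ⟨hR1, hR2⟩, hfeq, ⟨?_, ?_⟩, ?_, ?_, ?_⟩
  · gcongr
  · rw [div_lt_div_iff₀ hk1 hk0]
    have : R * k < b * k := by nlinarith
    rw [hb] at this
    rw [div_mul_cancel₀ _ (ne_of_gt hk0)] at this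
    linarith
  · exact div_pos (by linarith) hk1
  · rw [hfeq]
    rw [sub_eq_zero, div_mul_eq_mul_div, div_eq_iff (ne_of_gt hd), hb]
    field_simp
    ring
  · field_simp
    ring
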